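/- Let (X,μ) be a standard probability space and (ν_n) a sequence of Borel probability measures on X × X such that both coordinate projections push each ν_n forward to μ. Then the following are equivalent: (i) for all bounded Borel functions f₁, f₂ on X, ∫ f₁(x) f₂(y) dν_n(x,y) → ∫ f₁ f₂ dμ; (ii) for every Borel set A ⊆ X, ν_n(A × (X \ A)) → 0. -/

import Mathlib

open MeasureTheory Filter Topology

/-- Bounded measurable functions on a finite measure space are integrable. -/
lemma aux_integrable_of_bdd {α : Type*} [MeasurableSpace α] (ν : Measure α)
    [IsFiniteMeasure ν] {f : α → ℝ} (hf : Measurable f) (C : ℝ) (h : ∀ x, |f x| ≤ C) :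
    Integrable f ν :=
  (integrable_const C).mono' hf.aestronglyMeasurable
    (ae_of_all _ fun x => by simpa [Real.norm_eq_abs] using h x)

/-- Key lemma: condition (ii) implies `∫ |f(x) - f(y)| dν_n → 0` for bounded measurable `f`. -/
lemma aux_key {X : Type*} [MeasurableSpace X] (ν : ℕ → Measure (X × X))
    (hprob : ∀ n, IsProbabilityMeasure (ν n))
    (hA : ∀ A : Set X, MeasurableSet A →
      Tendsto (fun n => ((ν n) (A ×ˢ Aᶜ)).toReal) atTop (𝓝 0))
    (f : X → ℝ) (hf : Measurable f) (C : ℝ) (hC : ∀ x, |f x| ≤ C) :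
    Tendsto (fun n => ∫ p : X × X, |f p.1 - f p.2| ∂(ν n)) atTop (𝓝 0) := by
  rw [NormedAddCommGroup.tendsto_nhds_zero]
  intro ε hε
  set ε' : ℝ := ε / 2 with hε'def
  have hε' : 0 < ε' := by positivity
  set g : X → ℤ := fun x => ⌊f x / ε'⌋ with hg
  have hgm : Measurable g := (hf.div_const _).floor
  set A : ℤ → Set X := fun m => {x | g x = m} with hAdef
  have hAm : ∀ m, MeasurableSet (A m) := fun m => hgm (measurableSet_singleton m)
  set I : Finset ℤ := Finset.Icc ⌊(-C) / ε'⌋ ⌊C / ε'⌋ with hI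
  have hgI : ∀ x, g x ∈ I := by
    intro x
    have h1 : (-C) / ε' ≤ f x / ε' :=
      div_le_div_of_nonneg_right (by linarith [(abs_le.mp (hC x)).1]) hε'.le
    have h2 : f x / ε' ≤ C / ε' :=
      div_le_div_of_nonneg_right (by linarith [(abs_le.mp (hC x)).2]) hε'.le
    simp only [hI, Finset.mem_Icc]
    exact ⟨Int.floor_mono h1, Int.floor_mono h2⟩
  -- pointwise bound
  have hpt : ∀ p : X × X, |f p.1 - f p.2| ≤
      ε' + ∑ m ∈ I, Set.indicator (A m ×ˢ (A m)ᶜ) (fun _ => 2 * C) p := by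
    intro p
    have hC0 : 0 ≤ C := le_trans (abs_nonneg _) (hC p.1)
    by_cases h : g p.1 = g p.2
    · have hsum : ∑ m ∈ I, Set.indicator (A m ×ˢ (A m)ᶜ) (fun _ => 2 * C) p = 0 := by
        apply Finset.sum_eq_zero
        intro m _
        apply Set.indicator_of_notMem
        rintro ⟨h1, h2⟩
        exact h2 (by simpa [A, ← h] using h1)
      rw [hsum, add_zero]
      have hfl : ⌊f p.1 / ε'⌋ = ⌊f p.2 / ε'⌋ := h
      have l1 : (⌊f p.1 / ε'⌋ : ℝ) ≤ f p.1 / ε' := Int.floor_le _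
      have l2 : f p.1 / ε' < ⌊f p.1 / ε'⌋ + 1 := Int.lt_floor_add_one _
      have l3 : (⌊f p.2 / ε'⌋ : ℝ) ≤ f p.2 / ε' := Int.floor_le _
      have l4 : f p.2 / ε' < ⌊f p.2 / ε'⌋ + 1 := Int.lt_floor_add_one _
      have hcast : ((⌊f p.1 / ε'⌋ : ℤ) : ℝ) = ((⌊f p.2 / ε'⌋ : ℤ) : ℝ) := by
        exact_mod_cast hfl
      have : |f p.1 / ε' - f p.2 / ε'| ≤ 1 := abs_le.mpr ⟨by linarith, by linarith⟩
      have hdiv : f p.1 / ε' - f p.2 / ε' = (f p.1 - f p.2) / ε' := by ring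
      rw [hdiv, abs_div, abs_of_pos hε', div_le_one hε'] at this
      linarith
    · have hmem : p ∈ A (g p.1) ×ˢ (A (g p.1))ᶜ := by
        constructor
        · simp [A]
        · simpa [A] using fun hh => h hh.symm
      have hterm : Set.indicator (A (g p.1) ×ˢ (A (g p.1))ᶜ) (fun _ => 2 * C) p = 2 * C :=
        Set.indicator_of_mem hmem _
      have hsum : 2 * C ≤ ∑ m ∈ I, Set.indicator (A m ×ˢ (A m)ᶜ) (fun _ => 2 * C) p := by
        refine le_trans (le_of_eq hterm.symm) ?_
        exact Finset.single_le_sum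
          (f := fun m => Set.indicator (A m ×ˢ (A m)ᶜ) (fun _ => 2 * C) p)
          (fun m _ => Set.indicator_nonneg (fun _ _ => by positivity) p) (hgI p.1)
      calc |f p.1 - f p.2| ≤ |f p.1| + |f p.2| := abs_sub _ _
        _ ≤ C + C := add_le_add (hC p.1) (hC p.2)
        _ = 2 * C := by ring
        _ ≤ ε' + ∑ m ∈ I, Set.indicator (A m ×ˢ (A m)ᶜ) (fun _ => 2 * C) p := by linarith
  -- the bound sequence
  have hSm : ∀ m, MeasurableSet (A m ×ˢ (A m)ᶜ) := fun m => (hAm m).prod (hAm m).compl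
  set b : ℕ → ℝ := fun n => ε' + ∑ m ∈ I, ((ν n) (A m ×ˢ (A m)ᶜ)).toReal • (2 * C) with hb
  have hbound : ∀ n, ∫ p : X × X, |f p.1 - f p.2| ∂(ν n) ≤ b n := by
    intro n
    haveI := hprob n
    have hint1 : Integrable (fun p : X × X => |f p.1 - f p.2|) (ν n) := by
      apply aux_integrable_of_bdd _ (((hf.comp measurable_fst).sub
        (hf.comp measurable_snd)).abs) (2 * C)
      intro p
      rw [abs_abs]
      calc |f p.1 - f p.2| ≤ |f p.1| + |f p.2| := abs_sub _ _
        _ ≤ C + C := add_le_add (hC p.1) (hC p.2)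
        _ = 2 * C := by ring
    have hint2 : ∀ m ∈ I, Integrable
        (fun p : X × X => Set.indicator (A m ×ˢ (A m)ᶜ) (fun _ => 2 * C) p) (ν n) :=
      fun m _ => (integrable_const (2 * C)).indicator (hSm m)
    have hint3 : Integrable (fun p : X × X =>
        ε' + ∑ m ∈ I, Set.indicator (A m ×ˢ (A m)ᶜ) (fun _ => 2 * C) p) (ν n) :=
      (integrable_const ε').add (integrable_finset_sum I hint2)
    calc ∫ p : X × X, |f p.1 - f p.2| ∂(ν n)
        ≤ ∫ p : X × X, (ε' + ∑ m ∈ I, Set.indicator (A m ×ˢ (A m)ᶜ) (fun _ => 2 * C) p) ∂(ν n) :=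
          integral_mono hint1 hint3 hpt
      _ = ε' + ∑ m ∈ I, ((ν n) (A m ×ˢ (A m)ᶜ)).toReal • (2 * C) := by
          rw [integral_add (integrable_const ε') (integrable_finset_sum I hint2),
            integral_const, integral_finset_sum I hint2]
          simp only [Measure.real, measure_univ, ENNReal.toReal_one, smul_eq_mul, one_mul, one_smul]
          congr 1
          exact Finset.sum_congr rfl fun m _ => integral_indicator_const (2 * C) (hSm m)
  have hbtend : Tendsto b atTop (𝓝 ε') := by
    have hs : Tendsto (fun n => ∑ m ∈ I, ((ν n) (A m ×ˢ (A m)ᶜ)).toReal • (2 * C))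
        atTop (𝓝 0) := by
      have h0 : Tendsto (fun n => ∑ m ∈ I, ((ν n) (A m ×ˢ (A m)ᶜ)).toReal • (2 * C))
          atTop (𝓝 (∑ m ∈ I, (0 : ℝ) • (2 * C))) :=
        tendsto_finset_sum I (fun m _ => ((hA (A m) (hAm m)).smul_const (2 * C)))
      simpa using h0
    have := (tendsto_const_nhds (x := ε') (f := atTop)).add hs
    simpa [hb] using this
  have hev : ∀ᶠ n in atTop, b n < ε := hbtend.eventually_lt_const (by linarith)
  filter_upwards [hev] with n hn
  rw [Real.norm_eq_abs, abs_of_nonneg (integral_nonneg fun p => abs_nonneg _)]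
  exact lt_of_le_of_lt (hbound n) hn

/-- **Remark 2.3 (a), equivalence of (i) and (ii)'':** for probability measures `ν n` on
`X × X` with both marginals equal to `μ`, the correlation condition
`∫ f₁(x) f₂(y) dν_n → ∫ f₁ f₂ dμ` (for all bounded Borel `f₁, f₂`) is equivalent to
`ν_n (A × Aᶜ) → 0` for every Borel set `A`. -/
theorem stmt2 {X : Type*} [MeasurableSpace X] [StandardBorelSpace X]
    (μ : Measure X) [IsProbabilityMeasure μ]
    (ν : ℕ → Measure (X × X)) (hprob : ∀ n, IsProbabilityMeasure (ν n))
    (h1 : ∀ n, Measure.map Prod.fst (ν n) = μ)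
    (h2 : ∀ n, Measure.map Prod.snd (ν n) = μ) :
    (∀ f₁ f₂ : X → ℝ, Measurable f₁ → Measurable f₂ →
        (∃ C, ∀ x, |f₁ x| ≤ C) → (∃ C, ∀ x, |f₂ x| ≤ C) →
        Tendsto (fun n => ∫ p, f₁ p.1 * f₂ p.2 ∂(ν n)) atTop (𝓝 (∫ x, f₁ x * f₂ x ∂μ)))
      ↔ (∀ A : Set X, MeasurableSet A →
        Tendsto (fun n => ((ν n) (A ×ˢ Aᶜ)).toReal) atTop (𝓝 0)) := by
  constructor
  · intro h A hAm
    have := h (A.indicator 1) (Aᶜ.indicator 1)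
      (measurable_one.indicator hAm) (measurable_one.indicator hAm.compl)
      ⟨1, fun x => by by_cases hx : x ∈ A <;> simp [Set.indicator_apply, hx]⟩
      ⟨1, fun x => by by_cases hx : x ∈ Aᶜ <;> simp [Set.indicator_apply, hx]⟩
    have heq1 : ∫ x, A.indicator (1 : X → ℝ) x * Aᶜ.indicator 1 x ∂μ = 0 := by
      have hz : ∀ x, A.indicator (1 : X → ℝ) x * Aᶜ.indicator 1 x = 0 := by
        intro x
        by_cases hx : x ∈ A <;> simp [Set.indicator_apply, hx]
      simp [hz]
    have heq2 : ∀ n, ∫ p : X × X, A.indicator (1 : X → ℝ) p.1 * Aᶜ.indicator 1 p.2 ∂(ν n)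
        = ((ν n) (A ×ˢ Aᶜ)).toReal := by
      intro n
      have : ∀ p : X × X, A.indicator (1 : X → ℝ) p.1 * Aᶜ.indicator 1 p.2
          = (A ×ˢ Aᶜ).indicator (fun _ => (1 : ℝ)) p := by
        intro p
        by_cases h1 : p.1 ∈ A <;> by_cases h2 : p.2 ∈ Aᶜ <;>
          simp [Set.indicator_apply, h1, h2, Set.mem_prod]
      simp only [this]
      rw [integral_indicator_const (1 : ℝ) (hAm.prod hAm.compl), smul_eq_mul, mul_one]
      rfl
    rw [heq1] at this
    simpa only [heq2] using this
  · intro hA f₁ f₂ hf₁ hf₂ hb₁ hb₂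
    obtain ⟨C₁, hC₁⟩ := hb₁
    obtain ⟨C₂, hC₂⟩ := hb₂
    -- split the integral
    have hsplit : ∀ n, ∫ p : X × X, f₁ p.1 * f₂ p.2 ∂(ν n)
        = (∫ x, f₁ x * f₂ x ∂μ) + ∫ p : X × X, f₁ p.1 * (f₂ p.2 - f₂ p.1) ∂(ν n) := by
      intro n
      haveI := hprob n
      have hi1 : Integrable (fun p : X × X => f₁ p.1 * f₂ p.1) (ν n) := by
        apply aux_integrable_of_bdd _ ((hf₁.comp measurable_fst).mul (hf₂.comp measurable_fst))
          (C₁ * C₂)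
        intro p
        rw [Pi.mul_apply, abs_mul]
        exact mul_le_mul (hC₁ p.1) (hC₂ p.1) (abs_nonneg _)
          (le_trans (abs_nonneg _) (hC₁ p.1))
      have hi2 : Integrable (fun p : X × X => f₁ p.1 * (f₂ p.2 - f₂ p.1)) (ν n) := by
        apply aux_integrable_of_bdd _ ((hf₁.comp measurable_fst).mul
          ((hf₂.comp measurable_snd).sub (hf₂.comp measurable_fst))) (C₁ * (2 * C₂))
        intro p
        rw [Pi.mul_apply, abs_mul]
        apply mul_le_mul (hC₁ p.1) ?_ (abs_nonneg _) (le_trans (abs_nonneg _) (hC₁ p.1))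
        calc |f₂ p.2 - f₂ p.1| ≤ |f₂ p.2| + |f₂ p.1| := abs_sub _ _
          _ ≤ C₂ + C₂ := add_le_add (hC₂ p.2) (hC₂ p.1)
          _ = 2 * C₂ := by ring
      have hmarg : ∫ p : X × X, f₁ p.1 * f₂ p.1 ∂(ν n) = ∫ x, f₁ x * f₂ x ∂μ := by
        rw [← h1 n, integral_map (f := fun x => f₁ x * f₂ x) measurable_fst.aemeasurable
          (hf₁.mul hf₂).aestronglyMeasurable]
      calc ∫ p : X × X, f₁ p.1 * f₂ p.2 ∂(ν n)
          = ∫ p : X × X, (f₁ p.1 * f₂ p.1 + f₁ p.1 * (f₂ p.2 - f₂ p.1)) ∂(ν n) := by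
            congr 1; funext p; ring
        _ = (∫ p : X × X, f₁ p.1 * f₂ p.1 ∂(ν n))
            + ∫ p : X × X, f₁ p.1 * (f₂ p.2 - f₂ p.1) ∂(ν n) := integral_add hi1 hi2
        _ = (∫ x, f₁ x * f₂ x ∂μ) + ∫ p : X × X, f₁ p.1 * (f₂ p.2 - f₂ p.1) ∂(ν n) := by
            rw [hmarg]
    have hkey := aux_key ν hprob hA f₂ hf₂ C₂ hC₂
    have hC₁' : 0 ≤ C₁ ⊔ 0 := le_max_right _ _
    have herr : Tendsto (fun n => ∫ p : X × X, f₁ p.1 * (f₂ p.2 - f₂ p.1) ∂(ν n))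
        atTop (𝓝 0) := by
      apply squeeze_zero_norm (a := fun n => (C₁ ⊔ 0) * ∫ p : X × X, |f₂ p.1 - f₂ p.2| ∂(ν n))
      · intro n
        haveI := hprob n
        have habs : Integrable (fun p : X × X => |f₂ p.1 - f₂ p.2|) (ν n) := by
          apply aux_integrable_of_bdd _ (((hf₂.comp measurable_fst).sub
            (hf₂.comp measurable_snd)).abs) (2 * C₂)
          intro p
          rw [abs_abs]
          calc |f₂ p.1 - f₂ p.2| ≤ |f₂ p.1| + |f₂ p.2| := abs_sub _ _
            _ ≤ C₂ + C₂ := add_le_add (hC₂ p.1) (hC₂ p.2)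
            _ = 2 * C₂ := by ring
        calc ‖∫ p : X × X, f₁ p.1 * (f₂ p.2 - f₂ p.1) ∂(ν n)‖
            ≤ ∫ p : X × X, ‖f₁ p.1 * (f₂ p.2 - f₂ p.1)‖ ∂(ν n) := norm_integral_le_integral_norm _
          _ ≤ ∫ p : X × X, (C₁ ⊔ 0) * |f₂ p.1 - f₂ p.2| ∂(ν n) := by
              apply integral_mono _ (habs.const_mul _) _
              · exact (aux_integrable_of_bdd _ ((hf₁.comp measurable_fst).mul
                  ((hf₂.comp measurable_snd).sub (hf₂.comp measurable_fst))) (C₁ * (2 * C₂))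
                  (fun p => by
                    rw [Pi.mul_apply, abs_mul]
                    apply mul_le_mul (hC₁ p.1) ?_ (abs_nonneg _)
                      (le_trans (abs_nonneg _) (hC₁ p.1))
                    calc |f₂ p.2 - f₂ p.1| ≤ |f₂ p.2| + |f₂ p.1| := abs_sub _ _
                      _ ≤ C₂ + C₂ := add_le_add (hC₂ p.2) (hC₂ p.1)
                      _ = 2 * C₂ := by ring)).norm
              · intro p
                show ‖f₁ p.1 * (f₂ p.2 - f₂ p.1)‖ ≤ (C₁ ⊔ 0) * |f₂ p.1 - f₂ p.2|
                rw [Real.norm_eq_abs, abs_mul, abs_sub_comm (f₂ p.2)]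
                apply mul_le_mul_of_nonneg_right _ (abs_nonneg _)
                exact le_trans (hC₁ p.1) (le_max_left _ _)
          _ = (C₁ ⊔ 0) * ∫ p : X × X, |f₂ p.1 - f₂ p.2| ∂(ν n) := integral_const_mul _ _
      · simpa using hkey.const_mul (C₁ ⊔ 0)
    have := (tendsto_const_nhds (x := ∫ x, f₁ x * f₂ x ∂μ) (f := atTop)).add herr
    rw [add_zero] at this
    simpa only [← hsplit] using this
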